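/- Every subgraph of the one-inclusion graph of a class of VC-dimension at most d satisfies |E| ≤ d·|V|. -/

import Mathlib

open scoped Classical

noncomputable section

def CubeShatters {m : ℕ} (V : Finset (Fin m → Bool)) (I : Finset (Fin m)) : Prop :=
  ∀ g : Fin m → Bool, ∃ v ∈ V, ∀ i ∈ I, v i = g i

private lemma snoc_init_eq_update {m : ℕ} (v : Fin (m + 1) → Bool) (b : Bool) :
    Fin.snoc (Fin.init v) b = Function.update v (Fin.last m) b := by
  funext i
  refine Fin.lastCases ?_ ?_ i
  · simp
  · intro j
    rw [Fin.snoc_castSucc, Function.update_of_ne (Fin.castSucc_lt_last j).ne]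
    rfl

private lemma one_inclusion_aux :
    ∀ (m d : ℕ) (V : Finset (Fin m → Bool)),
    (∀ I : Finset (Fin m), CubeShatters V I → I.card ≤ d) →
    ((V ×ˢ V).filter
        (fun p => ∃ i, p.2 = Function.update p.1 i (!p.1 i))).card ≤ 2 * d * V.card := by
  intro m
  induction m with
  | zero =>
    intro d V _
    have : ((V ×ˢ V).filter
        (fun p => ∃ i, p.2 = Function.update p.1 i (!p.1 i))) = ∅ := by
      rw [Finset.filter_eq_empty_iff]
      rintro p - ⟨i, -⟩
      exact i.elim0
    simp [this]
  | succ m IH =>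
    intro d V hVC
    set lst := Fin.last m with hlst
    set P : Finset (Fin m → Bool) := V.image Fin.init with hPdef
    set W : Finset (Fin m → Bool) :=
      P.filter (fun w => Fin.snoc w false ∈ V ∧ Fin.snoc w true ∈ V) with hWdef
    have hWP : W ⊆ P := Finset.filter_subset _ _
    -- every element of V is a snoc of its init
    have hsnoc : ∀ v : Fin (m + 1) → Bool, Fin.snoc (Fin.init v) (v lst) = v :=
      fun v => Fin.snoc_init_self v
    -- V.card = P.card + W.card
    have hcardV : V.card = P.card + W.card := by
      have h1 : V.card = ∑ w ∈ P, (V.filter (fun v => Fin.init v = w)).card :=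
        Finset.card_eq_sum_card_image Fin.init V
      have h2 : ∀ w ∈ P, (V.filter (fun v => Fin.init v = w)).card
          = 1 + (if w ∈ W then 1 else 0) := by
        intro w hw
        have hsub : V.filter (fun v => Fin.init v = w)
            = ({Fin.snoc w false, Fin.snoc w true} : Finset _).filter (· ∈ V) := by
          ext v
          simp only [Finset.mem_filter, Finset.mem_insert, Finset.mem_singleton]
          constructor
          · rintro ⟨hv, rfl⟩
            refine ⟨?_, hv⟩
            cases hb : v lst
            · left; rw [← hb, hsnoc]
            · right; rw [← hb, hsnoc]
          · rintro ⟨h | h, hv⟩ <;> subst h <;> exact ⟨hv, by rw [Fin.init_snoc]⟩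
        have hdis : (Fin.snoc w false : Fin (m+1) → Bool) ≠ Fin.snoc w true := by
          intro h
          have := congrFun h lst
          simp [hlst] at this
        have hwW : w ∈ W ↔ (Fin.snoc w false ∈ V ∧ Fin.snoc w true ∈ V) := by
          rw [hWdef, Finset.mem_filter]
          exact ⟨fun h => h.2, fun h => ⟨hw, h⟩⟩
        rw [hsub]
        by_cases hf : Fin.snoc w false ∈ V <;> by_cases ht : Fin.snoc w true ∈ V
        · rw [if_pos (hwW.mpr ⟨hf, ht⟩)]
          rw [Finset.filter_insert, if_pos hf, Finset.filter_singleton, if_pos ht,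
            Finset.card_insert_of_notMem (by simp [hdis]), Finset.card_singleton]
        · rw [if_neg (fun h => ht (hwW.mp h).2)]
          rw [Finset.filter_insert, if_pos hf, Finset.filter_singleton, if_neg ht,
            Finset.card_insert_of_notMem (by simp), Finset.card_empty]
        · rw [if_neg (fun h => hf (hwW.mp h).1)]
          rw [Finset.filter_insert, if_neg hf, Finset.filter_singleton, if_pos ht,
            Finset.card_singleton]
        · exfalso
          obtain ⟨v, hv, rfl⟩ := Finset.mem_image.mp hw
          cases hb : v lst
          · exact hf (by rw [← hb, hsnoc]; exact hv)
          · exact ht (by rw [← hb, hsnoc]; exact hv)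
      rw [h1, Finset.sum_congr rfl h2, Finset.sum_add_distrib, Finset.sum_const,
        smul_eq_mul, mul_one, Finset.sum_ite_mem, Finset.inter_eq_right.mpr hWP,
        Finset.sum_const, smul_eq_mul, mul_one]
    -- edge sets
    set EV := ((V ×ˢ V).filter
        (fun p => ∃ i, p.2 = Function.update p.1 i (!p.1 i))) with hEVdef
    set EP := ((P ×ˢ P).filter
        (fun p => ∃ i, p.2 = Function.update p.1 i (!p.1 i))) with hEPdef
    set EW := ((W ×ˢ W).filter
        (fun p => ∃ i, p.2 = Function.update p.1 i (!p.1 i))) with hEWdef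
    set T := EV.filter (fun p => p.1 lst = p.2 lst) with hTdef
    set A := EV.filter (fun p => ¬ p.1 lst = p.2 lst) with hAdef
    have hsplit : T.card + A.card = EV.card :=
      Finset.card_filter_add_card_filter_not _
    -- cross edges: characterization
    have hAkey : ∀ p ∈ A, p.1 ∈ V ∧ p.2 ∈ V ∧ p.2 = Function.update p.1 lst (!p.1 lst) := by
      intro p hp
      rw [hAdef, Finset.mem_filter] at hp
      obtain ⟨hpEV, hne⟩ := hp
      rw [hEVdef, Finset.mem_filter, Finset.mem_product] at hpEV
      obtain ⟨⟨hp1, hp2⟩, i, hi⟩ := hpEV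
      refine ⟨hp1, hp2, ?_⟩
      have hilst : i = lst := by
        by_contra hne2
        obtain ⟨j, rfl⟩ := Fin.exists_castSucc_eq.mpr hne2
        exact hne (by rw [hi, Function.update_of_ne (Fin.castSucc_lt_last j).ne'])
      rw [← hilst]; exact hi
    have hA : A.card ≤ 2 * W.card := by
      have hle : A.card ≤ (W ×ˢ (Finset.univ : Finset Bool)).card := by
        apply Finset.card_le_card_of_injOn
          (fun p : (Fin (m+1) → Bool) × (Fin (m+1) → Bool) =>
            ((Fin.init p.1 : Fin m → Bool), p.1 lst))
        · intro p hp
          obtain ⟨hp1, hp2, hform⟩ := hAkey p hp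
          rw [Finset.mem_coe, Finset.mem_product]
          refine ⟨?_, Finset.mem_univ _⟩
          rw [hWdef, Finset.mem_filter]
          refine ⟨Finset.mem_image_of_mem _ hp1, ?_⟩
          have h2' : p.2 = Fin.snoc (Fin.init p.1) (!p.1 lst) := by
            rw [hform, ← snoc_init_eq_update]
          cases hb : p.1 lst
          · refine ⟨by rw [← hb, hsnoc]; exact hp1, ?_⟩
            rw [hb] at h2'
            simp only [Bool.not_false] at h2'
            rw [← h2']; exact hp2
          · refine ⟨?_, by rw [← hb, hsnoc]; exact hp1⟩
            rw [hb] at h2'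
            simp only [Bool.not_true] at h2'
            rw [← h2']; exact hp2
        · intro p hp q hq heq
          obtain ⟨-, -, hfp⟩ := hAkey p hp
          obtain ⟨-, -, hfq⟩ := hAkey q hq
          simp only [Prod.mk.injEq] at heq
          have h1 : p.1 = q.1 := by
            rw [← hsnoc p.1, ← hsnoc q.1, heq.1, heq.2]
          exact Prod.ext h1 (by rw [hfp, hfq, h1])
      calc A.card ≤ _ := hle
        _ = 2 * W.card := by
          rw [Finset.card_product, Finset.card_univ, Fintype.card_bool]
          ring
    -- within-slice edges: characterization
    have hTkey : ∀ p ∈ T, p.1 ∈ V ∧ p.2 ∈ V ∧ (Fin.init p.1, Fin.init p.2) ∈ EP ∧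
        p.1 = Fin.snoc (Fin.init p.1) (p.1 lst) ∧ p.2 = Fin.snoc (Fin.init p.2) (p.1 lst) := by
      intro p hp
      rw [hTdef, Finset.mem_filter] at hp
      obtain ⟨hpEV, hq⟩ := hp
      rw [hEVdef, Finset.mem_filter, Finset.mem_product] at hpEV
      obtain ⟨⟨hp1, hp2⟩, i, hi⟩ := hpEV
      have hil : i ≠ lst := by
        rintro rfl
        apply_fun (· lst) at hi
        rw [Function.update_self] at hi
        rw [← hq] at hi
        simp at hi
      obtain ⟨j, rfl⟩ := Fin.exists_castSucc_eq.mpr hil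
      refine ⟨hp1, hp2, ?_, (hsnoc p.1).symm, by rw [hq]; exact (hsnoc p.2).symm⟩
      rw [hEPdef, Finset.mem_filter, Finset.mem_product]
      refine ⟨⟨Finset.mem_image_of_mem _ hp1, Finset.mem_image_of_mem _ hp2⟩, j, ?_⟩
      rw [hi, Fin.init_update_castSucc]
      rfl
    have hT : T.card ≤ EP.card + EW.card := by
      have h1 : T.card = ∑ e ∈ T.image (fun p => (Fin.init p.1, Fin.init p.2)),
          (T.filter (fun p => (Fin.init p.1, Fin.init p.2) = e)).card :=
        Finset.card_eq_sum_card_image _ T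
      have himg : T.image (fun p => (Fin.init p.1, Fin.init p.2)) ⊆ EP := by
        intro e he
        obtain ⟨p, hp, rfl⟩ := Finset.mem_image.mp he
        exact (hTkey p hp).2.2.1
      have h2 : ∀ e ∈ T.image (fun p => (Fin.init p.1, Fin.init p.2)),
          (T.filter (fun p => (Fin.init p.1, Fin.init p.2) = e)).card
            ≤ if e ∈ EW then 2 else 1 := by
        intro e he
        set F := T.filter (fun p => (Fin.init p.1, Fin.init p.2) = e) with hF
        have hFT : F ⊆ T := Finset.filter_subset _ _
        have hFsub : F ⊆ {(Fin.snoc e.1 false, Fin.snoc e.2 false),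
            (Fin.snoc e.1 true, Fin.snoc e.2 true)} := by
          intro p hp
          rw [hF, Finset.mem_filter] at hp
          obtain ⟨hpT, hpe⟩ := hp
          obtain ⟨-, -, -, hs1, hs2⟩ := hTkey p hpT
          have he1 : Fin.init p.1 = e.1 := by rw [← hpe]
          have he2 : Fin.init p.2 = e.2 := by rw [← hpe]
          rw [Finset.mem_insert, Finset.mem_singleton]
          have hpeq : p = (Fin.snoc (Fin.init p.1) (p.1 lst),
              Fin.snoc (Fin.init p.2) (p.1 lst)) := Prod.ext hs1 hs2
          cases hb : p.1 lst
          · left; rw [hpeq, he1, he2, hb]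
          · right; rw [hpeq, he1, he2, hb]
        by_cases hcard : F.card ≤ 1
        · exact hcard.trans (by split <;> omega)
        · push_neg at hcard
          have hpair_card : ({(Fin.snoc e.1 false, Fin.snoc e.2 false),
              (Fin.snoc e.1 true, Fin.snoc e.2 true)} :
                Finset ((Fin (m+1) → Bool) × (Fin (m+1) → Bool))).card ≤ 2 :=
            (Finset.card_insert_le _ _).trans (by simp)
          have hEq : F = {(Fin.snoc e.1 false, Fin.snoc e.2 false),
              (Fin.snoc e.1 true, Fin.snoc e.2 true)} :=
            Finset.eq_of_subset_of_card_le hFsub (by omega)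
          have hfmem : ((Fin.snoc e.1 false : Fin (m+1) → Bool),
              (Fin.snoc e.2 false : Fin (m+1) → Bool)) ∈ F := by rw [hEq]; simp
          have htmem : ((Fin.snoc e.1 true : Fin (m+1) → Bool),
              (Fin.snoc e.2 true : Fin (m+1) → Bool)) ∈ F := by rw [hEq]; simp
          obtain ⟨hf1, hf2, -, -, -⟩ := hTkey _ (hFT hfmem)
          obtain ⟨ht1, ht2, -, -, -⟩ := hTkey _ (hFT htmem)
          have heEP := himg he
          rw [hEPdef, Finset.mem_filter, Finset.mem_product] at heEP
          have heEW : e ∈ EW := by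
            rw [hEWdef, Finset.mem_filter, Finset.mem_product]
            refine ⟨⟨?_, ?_⟩, heEP.2⟩
            · rw [hWdef, Finset.mem_filter]
              exact ⟨heEP.1.1, hf1, ht1⟩
            · rw [hWdef, Finset.mem_filter]
              exact ⟨heEP.1.2, hf2, ht2⟩
          rw [if_pos heEW]
          exact (Finset.card_le_card hFsub).trans hpair_card
      calc T.card = _ := h1
        _ ≤ ∑ e ∈ T.image (fun p : (Fin (m+1) → Bool) × (Fin (m+1) → Bool) =>
              ((Fin.init p.1 : Fin m → Bool), (Fin.init p.2 : Fin m → Bool))),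
            (if e ∈ EW then 2 else 1) := Finset.sum_le_sum h2
        _ ≤ ∑ e ∈ EP, (if e ∈ EW then 2 else 1) := Finset.sum_le_sum_of_subset himg
        _ = ∑ e ∈ EP, (1 + if e ∈ EW then 1 else 0) := by
            refine Finset.sum_congr rfl fun e _ => ?_
            split <;> rfl
        _ = EP.card + (EP ∩ EW).card := by
            rw [Finset.sum_add_distrib, Finset.sum_const, smul_eq_mul, mul_one,
              Finset.sum_ite_mem, Finset.sum_const, smul_eq_mul, mul_one]
        _ ≤ EP.card + EW.card := by
            have := Finset.card_le_card (Finset.inter_subset_right : EP ∩ EW ⊆ EW)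
            omega
    -- VC bound for the projection
    have hVCP : ∀ I : Finset (Fin m), CubeShatters P I → I.card ≤ d := by
      intro I hI
      have hcard : (I.image Fin.castSucc).card = I.card :=
        Finset.card_image_of_injective _ (Fin.castSucc_injective m)
      rw [← hcard]
      apply hVC
      intro g
      obtain ⟨w, hwP, hw⟩ := hI (Fin.init g)
      obtain ⟨v, hv, rfl⟩ := Finset.mem_image.mp hwP
      refine ⟨v, hv, ?_⟩
      intro j hj
      obtain ⟨i, hiI, rfl⟩ := Finset.mem_image.mp hj
      exact hw i hiI
    -- VC bound for the intersection
    have hVCW : ∀ I : Finset (Fin m), CubeShatters W I → W.Nonempty → I.card + 1 ≤ d := by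
      intro I hI _
      have hnot : lst ∉ I.image Fin.castSucc := by
        intro h
        obtain ⟨i, -, hi⟩ := Finset.mem_image.mp h
        exact (Fin.castSucc_lt_last i).ne hi
      have hcard : (insert lst (I.image Fin.castSucc)).card = I.card + 1 := by
        rw [Finset.card_insert_of_notMem hnot,
          Finset.card_image_of_injective _ (Fin.castSucc_injective m)]
      rw [← hcard]
      apply hVC
      intro g
      obtain ⟨w, hwW, hw⟩ := hI (Fin.init g)
      rw [hWdef, Finset.mem_filter] at hwW
      obtain ⟨hwP, hwf, hwt⟩ := hwW
      refine ⟨Fin.snoc w (g lst), ?_, ?_⟩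
      · cases hb : g lst
        · exact hwf
        · exact hwt
      · intro j hj
        rw [Finset.mem_insert] at hj
        rcases hj with rfl | hj
        · simp [hlst]
        · obtain ⟨i, hiI, rfl⟩ := Finset.mem_image.mp hj
          rw [Fin.snoc_castSucc]
          exact hw i hiI
    have hEP : EP.card ≤ 2 * d * P.card := IH d P hVCP
    have hEWW : EW.card + 2 * W.card ≤ 2 * d * W.card := by
      rcases W.eq_empty_or_nonempty with hWe | hWne
      · have : EW = ∅ := by
          rw [hEWdef, hWe]
          simp
        simp [this, hWe]
      · have hd : 1 ≤ d := by
          have := hVCW ∅ (fun g => ⟨hWne.choose, hWne.choose_spec, fun i hi => absurd hi (by simp)⟩) hWne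
          simpa using this
        have hEW : EW.card ≤ 2 * (d - 1) * W.card :=
          IH (d - 1) W (fun I hI => by have := hVCW I hI hWne; omega)
        have : 2 * (d - 1) * W.card + 2 * W.card = 2 * d * W.card := by
          have h1 : d - 1 + 1 = d := Nat.succ_pred_eq_of_pos hd
          calc 2 * (d - 1) * W.card + 2 * W.card = 2 * ((d - 1) + 1) * W.card := by ring
            _ = 2 * d * W.card := by rw [h1]
        omega
    calc EV.card = T.card + A.card := hsplit.symm
      _ ≤ (EP.card + EW.card) + 2 * W.card := Nat.add_le_add hT hA
      _ = EP.card + (EW.card + 2 * W.card) := by ring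
      _ ≤ 2 * d * P.card + 2 * d * W.card := Nat.add_le_add hEP hEWW
      _ = 2 * d * (P.card + W.card) := by ring
      _ = 2 * d * V.card := by rw [hcardV]

/-- Every (sub)graph of the one-inclusion graph of a class of VC-dimension at most `d`
has edge density at most `d`: counting ordered adjacent pairs, `2|E| ≤ 2d|V|`. -/
theorem one_inclusion_edge_density {m d : ℕ} (V : Finset (Fin m → Bool))
    (hVC : ∀ I : Finset (Fin m), CubeShatters V I → I.card ≤ d) :
    ((V ×ˢ V).filter
        (fun p => ∃ i, p.2 = Function.update p.1 i (!p.1 i))).card ≤ 2 * d * V.card :=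
  one_inclusion_aux m d V hVC
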